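/- Let n ≥ 1 and F₁,…,Fₙ : [0,1] → [0,1] be continuous, non-decreasing, with Fᵢ(0)=0, Fᵢ(1)=1, with equal entitlements 1/n. If there exists t ∈ {1,…,n−1} such that the closed intervals Fᵢ⁻¹({t/n}), i = 1,…,n, are pairwise disjoint, then a connected strongly-proportional allocation exists: there are cut points 0 = x₀ ≤ ⋯ ≤ xₙ = 1 and a bijection σ such that F_{σ(k)}(x_k) − F_{σ(k)}(x_{k−1}) > 1/n for all k. -/

import Mathlib

open Set

/-- Connected proportional division among m agents on [u,v]. -/
theorem propdiv : ∀ (m : ℕ), 1 ≤ m → ∀ (G : Fin m → ℝ → ℝ) (u v : ℝ), u ≤ v →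
    (∀ i, ContinuousOn (G i) (Icc u v)) → (∀ i, MonotoneOn (G i) (Icc u v)) →
    ∃ y : Fin (m+1) → ℝ, Monotone y ∧ y 0 = u ∧ y (Fin.last m) = v ∧
      (∀ k, y k ∈ Icc u v) ∧
      ∃ σ : Equiv.Perm (Fin m), ∀ k : Fin m,
        (G (σ k) v - G (σ k) u) / (m : ℝ) ≤ G (σ k) (y k.succ) - G (σ k) (y k.castSucc) := by
  intro m
  induction m with
  | zero => omega
  | succ m' ih =>
    intro _ G u v huv hcont hmono
    rcases Nat.eq_zero_or_pos m' with hm0 | hm1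
    · -- base case m = 1
      subst hm0
      refine ⟨fun k => if k.val = 0 then u else v, ?_, by simp, by simp [Fin.last], ?_, 1, ?_⟩
      · rw [Fin.monotone_iff_le_succ]
        intro i
        fin_cases i
        simp [huv]
      · intro k
        by_cases h : k.val = 0 <;> simp [h, huv, le_refl]
      · intro k
        fin_cases k
        simp
    · -- inductive step
      have hD : ∀ i, 0 ≤ G i v - G i u := by
        intro i
        have := hmono i ⟨le_refl u, huv⟩ ⟨huv, le_refl v⟩ huv
        linarith
      have key : ∀ i : Fin (m'+1), ∃ c, c ∈ Icc u v ∧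
          G i c = G i u + (G i v - G i u) / (m' + 1 : ℝ) := by
        intro i
        have hmem : G i u + (G i v - G i u) / (m' + 1 : ℝ) ∈ Icc (G i u) (G i v) := by
          constructor
          · have : 0 ≤ (G i v - G i u) / (m' + 1 : ℝ) :=
              div_nonneg (hD i) (by positivity)
            linarith
          · have h1 : (G i v - G i u) / (m' + 1 : ℝ) ≤ G i v - G i u :=
              div_le_self (hD i) (le_add_of_nonneg_left (Nat.cast_nonneg m'))
            linarith
        obtain ⟨c, hc, hc2⟩ := intermediate_value_Icc huv (hcont i) hmem
        exact ⟨c, hc, hc2⟩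
      choose c hc hc2 using key
      obtain ⟨i₀, -, hmin⟩ := Finset.exists_min_image Finset.univ c Finset.univ_nonempty
      have hcsub : Icc (c i₀) v ⊆ Icc u v := Icc_subset_Icc (hc i₀).1 le_rfl
      obtain ⟨y', hy'mono, hy'0, hy'last, hy'mem, τ, hτ⟩ :=
        ih hm1 (fun j => G (i₀.succAbove j)) (c i₀) v (hc i₀).2
          (fun j => (hcont _).mono hcsub) (fun j => (hmono _).mono hcsub)
      refine ⟨Fin.cons u y', ?_, by simp, ?_, ?_, ?_⟩
      · rw [Fin.monotone_iff_le_succ]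
        intro i
        refine Fin.cases ?_ (fun j => ?_) i
        · simpa [hy'0] using (hc i₀).1
        · have h1 : (j.succ).castSucc = (j.castSucc).succ := rfl
          rw [h1, Fin.cons_succ, Fin.cons_succ]
          exact hy'mono (Fin.castSucc_le_succ j)
      · rw [← Fin.succ_last, Fin.cons_succ, hy'last]
      · intro k
        refine Fin.cases ?_ (fun j => ?_) k
        · exact ⟨le_refl u, huv⟩
        · rw [Fin.cons_succ]; exact hcsub (hy'mem j)
      · -- permutation
        have hinj : Function.Injective
            (Fin.cons i₀ (fun k => i₀.succAbove (τ k)) : Fin (m'+1) → Fin (m'+1)) := by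
          intro p q hpq
          rcases Fin.eq_zero_or_eq_succ p with rfl | ⟨jp, rfl⟩ <;>
            rcases Fin.eq_zero_or_eq_succ q with rfl | ⟨jq, rfl⟩
          · rfl
          · rw [Fin.cons_zero, Fin.cons_succ] at hpq
            exact absurd hpq.symm (Fin.succAbove_ne i₀ (τ jq))
          · rw [Fin.cons_zero, Fin.cons_succ] at hpq
            exact absurd hpq (Fin.succAbove_ne i₀ (τ jp))
          · rw [Fin.cons_succ, Fin.cons_succ] at hpq
            have := τ.injective (Fin.succAbove_right_injective hpq)
            rw [this]
        refine ⟨Equiv.ofBijective _ (Finite.injective_iff_bijective.mp hinj), ?_⟩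
        intro k
        have hσ : ∀ p, (Equiv.ofBijective _ (Finite.injective_iff_bijective.mp hinj)) p
            = (Fin.cons i₀ (fun k => i₀.succAbove (τ k)) : Fin (m'+1) → Fin (m'+1)) p := fun p => rfl
        refine Fin.cases ?_ (fun j => ?_) k
        · -- piece 0 goes to i₀
          rw [hσ, Fin.cons_zero, Fin.castSucc_zero, Fin.cons_zero,
            show Fin.succ (0 : Fin (m'+1)) = Fin.succ (0 : Fin (m'+1)) from rfl, Fin.cons_succ,
            hy'0, hc2 i₀]
          push_cast
          linarith
        · -- piece j+1 goes to i₀.succAbove (τ j)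
          rw [hσ, Fin.cons_succ, ← Fin.succ_castSucc, Fin.cons_succ, Fin.cons_succ]
          refine le_trans ?_ (hτ j)
          set jj := i₀.succAbove (τ j)
          have h1 : G jj (c i₀) ≤ G jj u + (G jj v - G jj u) / ((m' : ℝ) + 1) := by
            rw [← hc2 jj]
            exact hmono jj (hc i₀) (hc jj) (hmin jj (Finset.mem_univ jj))
          have hm'pos : (0 : ℝ) < (m' : ℝ) := Nat.cast_pos.mpr hm1
          push_cast
          rw [div_le_div_iff₀ (by linarith) hm'pos]
          have h2 : G jj (c i₀) * ((m' : ℝ) + 1) ≤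
              G jj u * ((m' : ℝ) + 1) + (G jj v - G jj u) := by
            have := mul_le_mul_of_nonneg_right h1 (by linarith : (0:ℝ) ≤ (m' : ℝ) + 1)
            calc G jj (c i₀) * ((m' : ℝ) + 1)
                ≤ (G jj u + (G jj v - G jj u) / ((m' : ℝ) + 1)) * ((m' : ℝ) + 1) := this
              _ = G jj u * ((m' : ℝ) + 1) + (G jj v - G jj u) := by
                  field_simp
          nlinarith [hD jj]

set_option maxHeartbeats 1000000 in
theorem stmt6 (n : ℕ) (hn : 1 ≤ n) (F : Fin n → ℝ → ℝ)
    (hcont : ∀ i, ContinuousOn (F i) (Icc 0 1))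
    (hmono : ∀ i, MonotoneOn (F i) (Icc 0 1))
    (h0 : ∀ i, F i 0 = 0) (h1 : ∀ i, F i 1 = 1)
    (hdisj : ∃ t : ℕ, 0 < t ∧ t < n ∧ ∀ i j : Fin n, i ≠ j →
      Disjoint {x ∈ Icc (0:ℝ) 1 | F i x = (t : ℝ) / (n : ℝ)}
               {x ∈ Icc (0:ℝ) 1 | F j x = (t : ℝ) / (n : ℝ)}) :
    ∃ x : Fin (n+1) → ℝ, Monotone x ∧ x 0 = 0 ∧ x (Fin.last n) = 1 ∧
      ∃ σ : Equiv.Perm (Fin n), ∀ k : Fin n,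
        1 / (n : ℝ) < F (σ k) (x k.succ) - F (σ k) (x k.castSucc) := by
  obtain ⟨t, ht1, ht2, hdisj⟩ := hdisj
  have hnpos : (0:ℝ) < (n:ℝ) := by positivity
  have htpos : (0:ℝ) < (t:ℝ) := by exact_mod_cast ht1
  set r : ℝ := (t:ℝ)/(n:ℝ) with hr
  set S : Fin n → Set ℝ := fun i => {x ∈ Icc (0:ℝ) 1 | F i x = r} with hS
  -- S i nonempty, closed, bounded
  have hSne : ∀ i, (S i).Nonempty := by
    intro i
    have hrmem : r ∈ Icc (F i 0) (F i 1) := by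
      rw [h0, h1]
      constructor
      · positivity
      · rw [hr, div_le_one hnpos]
        exact_mod_cast ht2.le
    obtain ⟨x, hx, hx2⟩ := intermediate_value_Icc (by norm_num : (0:ℝ) ≤ 1) (hcont i) hrmem
    exact ⟨x, hx, hx2⟩
  have hSclosed : ∀ i, IsClosed (S i) := by
    intro i
    have heq : S i = Icc (0:ℝ) 1 ∩ (F i) ⁻¹' {r} := rfl
    rw [heq]
    exact (hcont i).preimage_isClosed_of_isClosed isClosed_Icc isClosed_singleton
  have hSsub : ∀ i, S i ⊆ Icc (0:ℝ) 1 := fun i x hx => hx.1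
  set a : Fin n → ℝ := fun i => sInf (S i) with ha
  set b : Fin n → ℝ := fun i => sSup (S i) with hb
  have haS : ∀ i, a i ∈ S i := fun i =>
    (hSclosed i).csInf_mem (hSne i) (BddBelow.mono (hSsub i) bddBelow_Icc)
  have hbS : ∀ i, b i ∈ S i := fun i =>
    (hSclosed i).csSup_mem (hSne i) (BddAbove.mono (hSsub i) bddAbove_Icc)
  have hab : ∀ i, a i ≤ b i := fun i =>
    csInf_le_csSup (hSne i) (BddBelow.mono (hSsub i) bddBelow_Icc)
      (BddAbove.mono (hSsub i) bddAbove_Icc)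
  -- S i is the interval [a i, b i]
  have hSint : ∀ i, ∀ x, a i ≤ x → x ≤ b i → x ∈ S i := by
    intro i x h1x h2x
    have hx01 : x ∈ Icc (0:ℝ) 1 := ⟨le_trans (haS i).1.1 h1x, le_trans h2x (hbS i).1.2⟩
    refine ⟨hx01, le_antisymm ?_ ?_⟩
    · rw [← (hbS i).2]
      exact hmono i hx01 (hbS i).1 h2x
    · rw [← (haS i).2]
      exact hmono i (haS i).1 hx01 h1x
  -- disjoint intervals are strictly ordered
  have horder : ∀ i j : Fin n, i ≠ j → b i < b j → b i < a j := by
    intro i j hij hbb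
    by_contra hcon
    push_neg at hcon
    rcases le_total (a i) (a j) with hcase | hcase
    · exact Set.disjoint_left.mp (hdisj i j hij) (hSint i (a j) hcase hcon) (haS j)
    · exact Set.disjoint_left.mp (hdisj i j hij) (haS i)
        (hSint j (a i) hcase (le_trans (hab i) hbb.le))
  -- b values are distinct
  have hbne : ∀ i j : Fin n, i ≠ j → b i ≠ b j := by
    intro i j hij heq
    exact Set.disjoint_left.mp (hdisj i j hij) (hbS i) (heq ▸ hbS j)
  set ρ : Equiv.Perm (Fin n) := Tuple.sort b with hρ
  have hsort : Monotone (b ∘ ρ) := Tuple.monotone_sort b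
  -- strictly ordered along sorted positions
  have hkey : ∀ p q : Fin n, p < q → b (ρ p) < a (ρ q) := by
    intro p q hpq
    have hne : ρ p ≠ ρ q := fun h => absurd (ρ.injective h) (ne_of_lt hpq)
    have hlt : b (ρ p) < b (ρ q) :=
      lt_of_le_of_ne (hsort hpq.le) (hbne _ _ hne)
    exact horder _ _ hne hlt
  have ht1n : t - 1 < n := by omega
  set p1 : Fin n := ⟨t - 1, ht1n⟩ with hp1
  set p2 : Fin n := ⟨t, ht2⟩ with hp2
  have hp12 : p1 < p2 := by simp [hp1, hp2, Fin.lt_def]; omega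
  set y : ℝ := (b (ρ p1) + a (ρ p2)) / 2 with hy
  have hby : b (ρ p1) < y := by
    have := hkey p1 p2 hp12
    rw [hy]; linarith
  have hya : y < a (ρ p2) := by
    have := hkey p1 p2 hp12
    rw [hy]; linarith
  have hy01 : y ∈ Icc (0:ℝ) 1 := by
    constructor
    · linarith [(hbS (ρ p1)).1.1, hby.le]
    · linarith [(haS (ρ p2)).1.2, hya.le]
  -- agents at sorted positions < t value [0,y] more than r
  have hFbig : ∀ p : Fin n, (p : ℕ) < t → r < F (ρ p) y := by
    intro p hp
    have hple : p ≤ p1 := by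
      rw [Fin.le_def]; simp [hp1]; omega
    have hblt : b (ρ p) < y := lt_of_le_of_lt (hsort hple) hby
    have hle : r ≤ F (ρ p) y := by
      rw [← (hbS (ρ p)).2]
      exact hmono _ (hbS (ρ p)).1 hy01 hblt.le
    rcases lt_or_eq_of_le hle with h | h
    · exact h
    · exfalso
      have : y ∈ S (ρ p) := ⟨hy01, h.symm⟩
      have : y ≤ b (ρ p) :=
        le_csSup (BddAbove.mono (hSsub (ρ p)) bddAbove_Icc) this
      linarith
  -- agents at sorted positions ≥ t value [0,y] less than r
  have hFsmall : ∀ p : Fin n, t ≤ (p : ℕ) → F (ρ p) y < r := by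
    intro p hp
    have hple : p2 ≤ p := by
      rw [Fin.le_def]; simp [hp2]; omega
    have halt : y < a (ρ p) := by
      rcases eq_or_lt_of_le hple with h | h
      · rw [← h]; exact hya
      · exact lt_of_lt_of_le hya (le_trans (hab (ρ p2)) (hkey p2 p h).le)
    have hle : F (ρ p) y ≤ r := by
      rw [← (haS (ρ p)).2]
      exact hmono _ hy01 (haS (ρ p)).1 halt.le
    rcases lt_or_eq_of_le hle with h | h
    · exact h
    · exfalso
      have : y ∈ S (ρ p) := ⟨hy01, h⟩
      have : a (ρ p) ≤ y :=
        csInf_le (BddBelow.mono (hSsub (ρ p)) bddBelow_Icc) this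
      linarith
  -- apply proportional division on both sides
  set m2 : ℕ := n - t with hm2
  have hm2pos : 1 ≤ m2 := by omega
  have htm2 : t + m2 = n := by omega
  have hsubL : Icc (0:ℝ) y ⊆ Icc (0:ℝ) 1 := Icc_subset_Icc le_rfl hy01.2
  have hsubR : Icc y (1:ℝ) ⊆ Icc (0:ℝ) 1 := Icc_subset_Icc hy01.1 le_rfl
  obtain ⟨yL, hLmono, hL0, hLlast, hLmem, σL, hσL⟩ :=
    propdiv t ht1 (fun i : Fin t => F (ρ (Fin.castLE ht2.le i))) 0 y hy01.1
      (fun i => (hcont _).mono hsubL) (fun i => (hmono _).mono hsubL)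
  obtain ⟨yR, hRmono, hR0, hRlast, hRmem, σR, hσR⟩ :=
    propdiv m2 hm2pos (fun j : Fin m2 => F (ρ ⟨t + j.val, by omega⟩)) y 1 hy01.2
      (fun i => (hcont _).mono hsubR) (fun i => (hmono _).mono hsubR)
  -- assemble the cut points
  set x : Fin (n+1) → ℝ := fun k =>
    if h : (k : ℕ) ≤ t then yL ⟨k, by omega⟩ else yR ⟨(k : ℕ) - t, by omega⟩ with hx
  have hxL : ∀ (k : Fin (n+1)) (h : (k : ℕ) ≤ t), x k = yL ⟨k, by omega⟩ := by
    intro k h; rw [hx]; simp only [dif_pos h]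
  have hxR : ∀ (k : Fin (n+1)) (h : t ≤ (k : ℕ)), x k = yR ⟨(k : ℕ) - t, by omega⟩ := by
    intro k h
    rcases eq_or_lt_of_le h with heq | hlt
    · rw [hx]; simp only [dif_pos heq.symm.le]
      have h1 : (⟨(k : ℕ), by omega⟩ : Fin (t+1)) = Fin.last t := by
        apply Fin.ext; simp [← heq]
      have h2 : (⟨(k : ℕ) - t, by omega⟩ : Fin (m2+1)) = 0 := by
        apply Fin.ext; simp; omega
      rw [h1, h2, hLlast, hR0]
    · rw [hx]; simp only [dif_neg (by omega : ¬ (k : ℕ) ≤ t)]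
  have hxmono : Monotone x := by
    rw [Fin.monotone_iff_le_succ]
    intro i
    have hc : (i.castSucc : ℕ) = (i : ℕ) := rfl
    have hs : (i.succ : ℕ) = (i : ℕ) + 1 := rfl
    rcases le_or_gt ((i : ℕ) + 1) t with h | h
    · rw [hxL i.castSucc (by omega), hxL i.succ (by omega)]
      exact hLmono (Fin.mk_le_mk.mpr (by omega))
    · rw [hxR i.castSucc (by omega), hxR i.succ (by omega)]
      exact hRmono (Fin.mk_le_mk.mpr (by omega))
  have hx0 : x 0 = 0 := by
    rw [hxL 0 (by simp), ← hL0]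
    congr 1
  have hx1 : x (Fin.last n) = 1 := by
    rw [hxR (Fin.last n) (by simp [Fin.last]; omega), ← hRlast]
    congr 1
  -- the permutation
  set g : Fin n → Fin n := fun k =>
    if h : (k : ℕ) < t then Fin.castLE ht2.le (σL ⟨k, h⟩)
    else ⟨t + ((σR ⟨(k : ℕ) - t, by omega⟩ : Fin m2) : ℕ), by omega⟩ with hg
  have hgval_lt : ∀ (k : Fin n) (h : (k : ℕ) < t),
      g k = Fin.castLE ht2.le (σL ⟨k, h⟩) := by
    intro k h; rw [hg]; simp only [dif_pos h]
  have hgval_ge : ∀ (k : Fin n) (h : t ≤ (k : ℕ)),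
      g k = ⟨t + ((σR ⟨(k : ℕ) - t, by omega⟩ : Fin m2) : ℕ), by omega⟩ := by
    intro k h; rw [hg]; simp only [dif_neg (by omega : ¬ (k : ℕ) < t)]
  have hginj : Function.Injective g := by
    intro p q hpq
    by_cases hp : (p : ℕ) < t <;> by_cases hq : (q : ℕ) < t
    · rw [hgval_lt p hp, hgval_lt q hq] at hpq
      have h2 := σL.injective (Fin.castLE_injective _ hpq)
      have h3 := congrArg Fin.val h2
      simp only at h3
      exact Fin.ext h3
    · rw [hgval_lt p hp, hgval_ge q (by omega)] at hpq
      have h3 := congrArg Fin.val hpq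
      simp only [Fin.coe_castLE] at h3
      have := (σL ⟨p, hp⟩).isLt
      omega
    · rw [hgval_ge p (by omega), hgval_lt q hq] at hpq
      have h3 := congrArg Fin.val hpq
      simp only [Fin.coe_castLE] at h3
      have := (σL ⟨q, hq⟩).isLt
      omega
    · rw [hgval_ge p (by omega), hgval_ge q (by omega)] at hpq
      have h3 := congrArg Fin.val hpq
      simp only at h3
      have h4 : (σR ⟨(p : ℕ) - t, by omega⟩ : Fin m2) = σR ⟨(q : ℕ) - t, by omega⟩ :=
        Fin.ext (by omega)
      have h5 := σR.injective h4
      have h6 := congrArg Fin.val h5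
      simp only at h6
      exact Fin.ext (by omega)
  refine ⟨x, hxmono, hx0, hx1,
    (Equiv.ofBijective g (Finite.injective_iff_bijective.mp hginj)).trans ρ, ?_⟩
  intro k
  have hσk : ((Equiv.ofBijective g (Finite.injective_iff_bijective.mp hginj)).trans ρ) k
      = ρ (g k) := rfl
  rw [hσk]
  by_cases hk : (k : ℕ) < t
  · -- left piece
    set k' : Fin t := ⟨k, hk⟩ with hk'
    rw [hgval_lt k hk]
    have e1 : x k.castSucc = yL (Fin.castSucc k') := by
      rw [hxL k.castSucc (by simp; omega)]
      congr 1
    have e2 : x k.succ = yL (Fin.succ k') := by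
      rw [hxL k.succ (by simp; omega)]
      congr 1
    rw [e1, e2]
    set j : Fin n := ρ (Fin.castLE ht2.le (σL k')) with hj
    have hjy : r < F j y := hFbig (Fin.castLE ht2.le (σL k')) (by
      simp only [Fin.coe_castLE]
      exact (σL k').isLt)
    calc 1 / (n : ℝ) = r / (t : ℝ) := by rw [hr]; field_simp
      _ < F j y / (t : ℝ) := by gcongr
      _ = (F j y - F j 0) / (t : ℝ) := by rw [h0 j, sub_zero]
      _ ≤ F j (yL (Fin.succ k')) - F j (yL (Fin.castSucc k')) := hσL k'
  · -- right piece
    push_neg at hk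
    set k'' : Fin m2 := ⟨(k : ℕ) - t, by omega⟩ with hk''
    rw [hgval_ge k hk]
    have e1 : x k.castSucc = yR (Fin.castSucc k'') := by
      rw [hxR k.castSucc (by simp; omega)]
      congr 1
    have e2 : x k.succ = yR (Fin.succ k'') := by
      rw [hxR k.succ (by simp; omega)]
      congr 1
      apply Fin.ext
      simp
      have : (k'' : ℕ) = (k : ℕ) - t := rfl
      omega
    rw [e1, e2]
    set pos : Fin n := ⟨t + ((σR k'' : Fin m2) : ℕ), by omega⟩ with hpos
    set j : Fin n := ρ pos with hj
    have hjy : F j y < r := hFsmall pos (by simp [hpos])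
    have hm2cast : (m2 : ℝ) = (n : ℝ) - (t : ℝ) := by
      rw [hm2]
      push_cast [Nat.cast_sub ht2.le]
      ring
    have hm2pos' : (0 : ℝ) < (m2 : ℝ) := by
      have : (0:ℕ) < m2 := hm2pos
      exact_mod_cast this
    have h5 : (m2 : ℝ) / (n : ℝ) = 1 - r := by
      rw [hr, hm2cast]
      field_simp
    calc 1 / (n : ℝ) = ((m2 : ℝ) / (n : ℝ)) / (m2 : ℝ) := by field_simp
      _ < (1 - F j y) / (m2 : ℝ) := by
          rw [h5]
          gcongr
      _ = (F j 1 - F j y) / (m2 : ℝ) := by rw [h1 j]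
      _ ≤ F j (yR (Fin.succ k'')) - F j (yR (Fin.castSucc k'')) := hσR k''
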